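/- Let M be the 14×14 symmetric matrix indexed by {y, x, A₁, B₁, C₁, A₂, B₂, C₂, A₃, B₃, C₃, A₄, B₄, C₄} with diagonal entries 1 and off-diagonal entries: M(Aᵢ, Bᵢ) = −√3/2 and M(Bᵢ, Cᵢ) = −1/2 for i = 1,2,3,4, M(y, Aᵢ) = −1/2 and M(x, Cᵢ) = −1/2 for i = 1,2,3,4, and all other off-diagonal entries 0. Then M has rank 10, and its quadratic form has exactly one negative eigenvalue and nine positive eigenvalues (i.e., signature (9,1) with 4-dimensional kernel). -/

import Mathlib

/-- Off-diagonal entry (for indices i < j) of the Gram matrix of P⋆: nodes are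
indexed y = 0, x = 1, and the four chains Aᵢ–Bᵢ–Cᵢ occupy indices
(2+3i, 3+3i, 4+3i) for i = 0,1,2,3.  So A-nodes are ≡ 2, B-nodes ≡ 0 and
C-nodes ≡ 1 (mod 3) among indices ≥ 2. -/
noncomputable def pstarEntry (i j : ℕ) : ℝ :=
  if 2 ≤ i ∧ j = i + 1 ∧ i % 3 = 2 then -(Real.sqrt 3) / 2       -- M(Aᵢ,Bᵢ)
  else if 2 ≤ i ∧ j = i + 1 ∧ i % 3 = 0 then -(1/2)              -- M(Bᵢ,Cᵢ)
  else if i = 0 ∧ 2 ≤ j ∧ j % 3 = 2 then -(1/2)                  -- M(y,Aᵢ)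
  else if i = 1 ∧ 2 ≤ j ∧ j % 3 = 1 then -(1/2)                  -- M(x,Cᵢ)
  else 0

/-- The Gram matrix of the Coxeter polyhedron P⋆ ⊂ ℍ⁹. -/
noncomputable def PstarGram : Matrix (Fin 14) (Fin 14) ℝ := fun i j =>
  if i = j then 1
  else if (i : ℕ) < (j : ℕ) then pstarEntry i j else pstarEntry j i

def CAZ : Matrix (Fin 14) (Fin 14) ℤ := Matrix.of fun i j =>
  if (i:ℕ) = 0 then (if (j:ℕ) = 0 then 924 else if (j:ℕ) = 2 then -462 else if (j:ℕ) = 5 then -462 else if (j:ℕ) = 8 then -462 else if (j:ℕ) = 11 then -462 else (0:ℤ))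
  else if (i:ℕ) = 1 then (if (j:ℕ) = 1 then 924 else if (j:ℕ) = 4 then -462 else if (j:ℕ) = 7 then -462 else if (j:ℕ) = 10 then -462 else if (j:ℕ) = 13 then -462 else (0:ℤ))
  else if (i:ℕ) = 2 then (if (j:ℕ) = 2 then 924 else if (j:ℕ) = 5 then -308 else if (j:ℕ) = 8 then -308 else if (j:ℕ) = 11 then -308 else (0:ℤ))
  else if (i:ℕ) = 3 then (if (j:ℕ) = 3 then -616 else if (j:ℕ) = 4 then 924 else if (j:ℕ) = 7 then -308 else if (j:ℕ) = 10 then -308 else if (j:ℕ) = 13 then -308 else (0:ℤ))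
  else if (i:ℕ) = 4 then (if (j:ℕ) = 3 then 924 else if (j:ℕ) = 7 then 462 else if (j:ℕ) = 10 then 462 else if (j:ℕ) = 13 then 462 else (0:ℤ))
  else if (i:ℕ) = 5 then (if (j:ℕ) = 5 then 924 else if (j:ℕ) = 8 then -84 else if (j:ℕ) = 11 then -84 else (0:ℤ))
  else if (i:ℕ) = 6 then (if (j:ℕ) = 6 then 924 else if (j:ℕ) = 7 then -1848 else if (j:ℕ) = 10 then 693 else if (j:ℕ) = 13 then 693 else (0:ℤ))
  else if (i:ℕ) = 7 then (if (j:ℕ) = 8 then 924 else if (j:ℕ) = 11 then -132 else (0:ℤ))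
  else if (i:ℕ) = 8 then (if (j:ℕ) = 9 then 924 else if (j:ℕ) = 10 then -1848 else if (j:ℕ) = 13 then 1386 else (0:ℤ))
  else if (i:ℕ) = 9 then (if (j:ℕ) = 11 then 924 else (0:ℤ))
  else if (i:ℕ) = 10 then (if (j:ℕ) = 7 then 924 else (0:ℤ))
  else if (i:ℕ) = 11 then (if (j:ℕ) = 10 then 924 else (0:ℤ))
  else if (i:ℕ) = 12 then (if (j:ℕ) = 12 then 924 else (0:ℤ))
  else if (i:ℕ) = 13 then (if (j:ℕ) = 13 then 924 else (0:ℤ))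
  else (0:ℤ)

def CBZ : Matrix (Fin 14) (Fin 14) ℤ := Matrix.of fun i j =>
  if (i:ℕ) = 2 then (if (j:ℕ) = 3 then -616 else (0:ℤ))
  else if (i:ℕ) = 4 then (if (j:ℕ) = 5 then 462 else if (j:ℕ) = 8 then 462 else if (j:ℕ) = 11 then 462 else (0:ℤ))
  else if (i:ℕ) = 5 then (if (j:ℕ) = 6 then -504 else if (j:ℕ) = 7 then 84 else if (j:ℕ) = 10 then 84 else if (j:ℕ) = 13 then 84 else (0:ℤ))
  else if (i:ℕ) = 6 then (if (j:ℕ) = 8 then -231 else if (j:ℕ) = 11 then -231 else (0:ℤ))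
  else if (i:ℕ) = 7 then (if (j:ℕ) = 9 then -528 else if (j:ℕ) = 10 then 132 else if (j:ℕ) = 13 then 132 else (0:ℤ))
  else if (i:ℕ) = 8 then (if (j:ℕ) = 11 then -462 else (0:ℤ))
  else if (i:ℕ) = 9 then (if (j:ℕ) = 12 then -616 else if (j:ℕ) = 13 then 308 else (0:ℤ))
  else (0:ℤ)

def CiAZ : Matrix (Fin 14) (Fin 14) ℤ := Matrix.of fun i j =>
  if (i:ℕ) = 0 then (if (j:ℕ) = 0 then 924 else if (j:ℕ) = 2 then 462 else if (j:ℕ) = 5 then 154 else if (j:ℕ) = 7 then 231 else if (j:ℕ) = 9 then 462 else (0:ℤ))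
  else if (i:ℕ) = 1 then (if (j:ℕ) = 1 then 924 else if (j:ℕ) = 3 then 462 else if (j:ℕ) = 4 then 308 else if (j:ℕ) = 6 then -252 else if (j:ℕ) = 8 then -396 else if (j:ℕ) = 12 then -924 else if (j:ℕ) = 13 then 1848 else (0:ℤ))
  else if (i:ℕ) = 2 then (if (j:ℕ) = 2 then 924 else if (j:ℕ) = 5 then -616 else if (j:ℕ) = 7 then -924 else if (j:ℕ) = 9 then -1848 else (0:ℤ))
  else if (i:ℕ) = 3 then (if (j:ℕ) = 4 then 924 else if (j:ℕ) = 6 then -756 else if (j:ℕ) = 8 then -1188 else if (j:ℕ) = 10 then -1848 else if (j:ℕ) = 11 then -1848 else if (j:ℕ) = 12 then -2772 else if (j:ℕ) = 13 then 3696 else (0:ℤ))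
  else if (i:ℕ) = 4 then (if (j:ℕ) = 3 then 924 else if (j:ℕ) = 4 then 616 else if (j:ℕ) = 6 then -504 else if (j:ℕ) = 8 then -792 else if (j:ℕ) = 10 then -924 else if (j:ℕ) = 11 then -924 else if (j:ℕ) = 12 then -1848 else if (j:ℕ) = 13 then 2772 else (0:ℤ))
  else if (i:ℕ) = 5 then (if (j:ℕ) = 5 then 924 else if (j:ℕ) = 7 then 462 else if (j:ℕ) = 9 then 924 else (0:ℤ))
  else if (i:ℕ) = 6 then (if (j:ℕ) = 6 then 924 else if (j:ℕ) = 8 then 396 else if (j:ℕ) = 10 then 1848 else if (j:ℕ) = 12 then 924 else if (j:ℕ) = 13 then -1848 else (0:ℤ))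
  else if (i:ℕ) = 7 then (if (j:ℕ) = 10 then 924 else (0:ℤ))
  else if (i:ℕ) = 8 then (if (j:ℕ) = 7 then 924 else if (j:ℕ) = 9 then 924 else (0:ℤ))
  else if (i:ℕ) = 9 then (if (j:ℕ) = 8 then 924 else if (j:ℕ) = 11 then 1848 else if (j:ℕ) = 12 then 924 else if (j:ℕ) = 13 then -1848 else (0:ℤ))
  else if (i:ℕ) = 10 then (if (j:ℕ) = 11 then 924 else (0:ℤ))
  else if (i:ℕ) = 11 then (if (j:ℕ) = 9 then 924 else (0:ℤ))
  else if (i:ℕ) = 12 then (if (j:ℕ) = 12 then 924 else (0:ℤ))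
  else if (i:ℕ) = 13 then (if (j:ℕ) = 13 then 924 else (0:ℤ))
  else (0:ℤ)

def CiBZ : Matrix (Fin 14) (Fin 14) ℤ := Matrix.of fun i j =>
  if (i:ℕ) = 0 then (if (j:ℕ) = 4 then 308 else if (j:ℕ) = 6 then 84 else if (j:ℕ) = 8 then 132 else if (j:ℕ) = 12 then 308 else if (j:ℕ) = 13 then -616 else (0:ℤ))
  else if (i:ℕ) = 1 then (if (j:ℕ) = 5 then -154 else if (j:ℕ) = 7 then -231 else if (j:ℕ) = 9 then -462 else (0:ℤ))
  else if (i:ℕ) = 2 then (if (j:ℕ) = 4 then 616 else if (j:ℕ) = 6 then -336 else if (j:ℕ) = 8 then -528 else if (j:ℕ) = 10 then -924 else if (j:ℕ) = 11 then -924 else if (j:ℕ) = 12 then -1232 else if (j:ℕ) = 13 then 1540 else (0:ℤ))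
  else if (i:ℕ) = 3 then (if (j:ℕ) = 5 then -462 else if (j:ℕ) = 7 then -693 else if (j:ℕ) = 9 then -1386 else (0:ℤ))
  else if (i:ℕ) = 4 then (if (j:ℕ) = 5 then -308 else if (j:ℕ) = 7 then -462 else if (j:ℕ) = 9 then -924 else (0:ℤ))
  else if (i:ℕ) = 5 then (if (j:ℕ) = 6 then 504 else if (j:ℕ) = 8 then 264 else if (j:ℕ) = 10 then 924 else if (j:ℕ) = 12 then 616 else if (j:ℕ) = 13 then -1232 else (0:ℤ))
  else if (i:ℕ) = 6 then (if (j:ℕ) = 7 then 231 else if (j:ℕ) = 9 then 462 else (0:ℤ))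
  else if (i:ℕ) = 8 then (if (j:ℕ) = 8 then 528 else if (j:ℕ) = 11 then 924 else if (j:ℕ) = 12 then 616 else if (j:ℕ) = 13 then -1232 else (0:ℤ))
  else if (i:ℕ) = 9 then (if (j:ℕ) = 9 then 462 else (0:ℤ))
  else if (i:ℕ) = 11 then (if (j:ℕ) = 12 then 616 else if (j:ℕ) = 13 then -308 else (0:ℤ))
  else (0:ℤ)

def DZv : Fin 14 → ℤ := fun i =>
  if (i:ℕ) = 0 then 1848 else if (i:ℕ) = 1 then 1848 else if (i:ℕ) = 2 then 1386 else if (i:ℕ) = 3 then 1386 else if (i:ℕ) = 4 then -616 else if (i:ℕ) = 5 then 1694 else if (i:ℕ) = 6 then 336 else if (i:ℕ) = 7 then 1617 else if (i:ℕ) = 8 then 264 else if (i:ℕ) = 9 then 1386 else (0:ℤ)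

def MAs : Matrix (Fin 14) (Fin 14) ℤ := Matrix.of fun i j =>
  if (i:ℕ) = 0 then (if (j:ℕ) = 0 then 1577778048 else if (j:ℕ) = 2 then -788889024 else if (j:ℕ) = 5 then -788889024 else if (j:ℕ) = 8 then -788889024 else if (j:ℕ) = 11 then -788889024 else (0:ℤ))
  else if (i:ℕ) = 1 then (if (j:ℕ) = 1 then 1577778048 else if (j:ℕ) = 4 then -788889024 else if (j:ℕ) = 7 then -788889024 else if (j:ℕ) = 10 then -788889024 else if (j:ℕ) = 13 then -788889024 else (0:ℤ))
  else if (i:ℕ) = 2 then (if (j:ℕ) = 0 then -788889024 else if (j:ℕ) = 2 then 1577778048 else (0:ℤ))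
  else if (i:ℕ) = 3 then (if (j:ℕ) = 3 then 1577778048 else if (j:ℕ) = 4 then -788889024 else (0:ℤ))
  else if (i:ℕ) = 4 then (if (j:ℕ) = 1 then -788889024 else if (j:ℕ) = 3 then -788889024 else if (j:ℕ) = 4 then 1577778048 else (0:ℤ))
  else if (i:ℕ) = 5 then (if (j:ℕ) = 0 then -788889024 else if (j:ℕ) = 5 then 1577778048 else (0:ℤ))
  else if (i:ℕ) = 6 then (if (j:ℕ) = 6 then 1577778048 else if (j:ℕ) = 7 then -788889024 else (0:ℤ))
  else if (i:ℕ) = 7 then (if (j:ℕ) = 1 then -788889024 else if (j:ℕ) = 6 then -788889024 else if (j:ℕ) = 7 then 1577778048 else (0:ℤ))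
  else if (i:ℕ) = 8 then (if (j:ℕ) = 0 then -788889024 else if (j:ℕ) = 8 then 1577778048 else (0:ℤ))
  else if (i:ℕ) = 9 then (if (j:ℕ) = 9 then 1577778048 else if (j:ℕ) = 10 then -788889024 else (0:ℤ))
  else if (i:ℕ) = 10 then (if (j:ℕ) = 1 then -788889024 else if (j:ℕ) = 9 then -788889024 else if (j:ℕ) = 10 then 1577778048 else (0:ℤ))
  else if (i:ℕ) = 11 then (if (j:ℕ) = 0 then -788889024 else if (j:ℕ) = 11 then 1577778048 else (0:ℤ))
  else if (i:ℕ) = 12 then (if (j:ℕ) = 12 then 1577778048 else if (j:ℕ) = 13 then -788889024 else (0:ℤ))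
  else if (i:ℕ) = 13 then (if (j:ℕ) = 1 then -788889024 else if (j:ℕ) = 12 then -788889024 else if (j:ℕ) = 13 then 1577778048 else (0:ℤ))
  else (0:ℤ)

def MBs : Matrix (Fin 14) (Fin 14) ℤ := Matrix.of fun i j =>
  if (i:ℕ) = 2 then (if (j:ℕ) = 3 then -788889024 else (0:ℤ))
  else if (i:ℕ) = 3 then (if (j:ℕ) = 2 then -788889024 else (0:ℤ))
  else if (i:ℕ) = 5 then (if (j:ℕ) = 6 then -788889024 else (0:ℤ))
  else if (i:ℕ) = 6 then (if (j:ℕ) = 5 then -788889024 else (0:ℤ))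
  else if (i:ℕ) = 8 then (if (j:ℕ) = 9 then -788889024 else (0:ℤ))
  else if (i:ℕ) = 9 then (if (j:ℕ) = 8 then -788889024 else (0:ℤ))
  else if (i:ℕ) = 11 then (if (j:ℕ) = 12 then -788889024 else (0:ℤ))
  else if (i:ℕ) = 12 then (if (j:ℕ) = 11 then -788889024 else (0:ℤ))
  else (0:ℤ)


open Matrix Finset

noncomputable def rt3 : ℝ := Real.sqrt 3

lemma rt3_mul_self : rt3 * rt3 = 3 := Real.mul_self_sqrt (by norm_num)

/-! ### Integer-level identities, verified by `decide`. -/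

set_option maxHeartbeats 4000000 in
lemma zCC1 : CAZ * CiAZ + (CBZ * CiBZ + CBZ * CiBZ + CBZ * CiBZ) =
    Matrix.diagonal (fun _ => (853776 : ℤ)) := by decide

set_option maxHeartbeats 4000000 in
lemma zCC2 : CAZ * CiBZ + CBZ * CiAZ = 0 := by decide

set_option maxHeartbeats 4000000 in
lemma zM1 : CAZᵀ * (Matrix.diagonal DZv * CAZ) +
    (CBZᵀ * (Matrix.diagonal DZv * CBZ) + CBZᵀ * (Matrix.diagonal DZv * CBZ) +
      CBZᵀ * (Matrix.diagonal DZv * CBZ)) = MAs := by decide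

set_option maxHeartbeats 4000000 in
lemma zM2 : CAZᵀ * (Matrix.diagonal DZv * CBZ) + CBZᵀ * (Matrix.diagonal DZv * CAZ) =
    MBs := by decide

/-! ### Real matrices -/

noncomputable def Pm : Matrix (Fin 14) (Fin 14) ℝ := CAZ.map (Int.cast : ℤ → ℝ)
noncomputable def Qm : Matrix (Fin 14) (Fin 14) ℝ := CBZ.map (Int.cast : ℤ → ℝ)
noncomputable def Rm : Matrix (Fin 14) (Fin 14) ℝ := CiAZ.map (Int.cast : ℤ → ℝ)
noncomputable def Sm : Matrix (Fin 14) (Fin 14) ℝ := CiBZ.map (Int.cast : ℤ → ℝ)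
noncomputable def Gm : Matrix (Fin 14) (Fin 14) ℝ := (Matrix.diagonal DZv).map (Int.cast : ℤ → ℝ)

noncomputable def Cmat : Matrix (Fin 14) (Fin 14) ℝ := ((924:ℝ))⁻¹ • (Pm + rt3 • Qm)
noncomputable def CmatInv : Matrix (Fin 14) (Fin 14) ℝ := ((924:ℝ))⁻¹ • (Rm + rt3 • Sm)
noncomputable def dvec : Fin 14 → ℝ := fun i => ((1848:ℝ))⁻¹ * ((DZv i : ℤ) : ℝ)

lemma rCC1 : Pm * Rm + (Qm * Sm + Qm * Sm + Qm * Sm) =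
    Matrix.diagonal (fun _ => (853776 : ℝ)) := by
  have h := congrArg (Int.castRingHom ℝ).mapMatrix zCC1
  simp only [map_add, RingHom.mapMatrix_apply, Matrix.map_mul] at h
  rw [Matrix.diagonal_map (by simp)] at h
  exact h

lemma rCC2 : Pm * Sm + Qm * Rm = 0 := by
  have h := congrArg (Int.castRingHom ℝ).mapMatrix zCC2
  simp only [map_add, RingHom.mapMatrix_apply, Matrix.map_mul, map_zero] at h
  exact h

lemma rM1 : Pmᵀ * (Gm * Pm) + (Qmᵀ * (Gm * Qm) + Qmᵀ * (Gm * Qm) + Qmᵀ * (Gm * Qm)) =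
    MAs.map (Int.cast : ℤ → ℝ) := by
  have h := congrArg (Int.castRingHom ℝ).mapMatrix zM1
  simp only [map_add, RingHom.mapMatrix_apply, Matrix.map_mul, Matrix.transpose_map] at h
  exact h

lemma rM2 : Pmᵀ * (Gm * Qm) + Qmᵀ * (Gm * Pm) = MBs.map (Int.cast : ℤ → ℝ) := by
  have h := congrArg (Int.castRingHom ℝ).mapMatrix zM2
  simp only [map_add, RingHom.mapMatrix_apply, Matrix.map_mul, Matrix.transpose_map] at h
  exact h

lemma hCC : Cmat * CmatInv = 1 := by
  unfold Cmat CmatInv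
  rw [Matrix.smul_mul, Matrix.mul_smul, smul_smul]
  have expand : (Pm + rt3 • Qm) * (Rm + rt3 • Sm) =
      (Pm * Rm + (Qm * Sm + Qm * Sm + Qm * Sm)) + rt3 • (Pm * Sm + Qm * Rm) := by
    simp only [add_mul, mul_add, Matrix.smul_mul, Matrix.mul_smul, smul_smul, rt3_mul_self]
    module
  rw [expand, rCC1, rCC2, smul_zero, add_zero, ← Matrix.diagonal_smul]
  have : (((924:ℝ))⁻¹ * ((924:ℝ))⁻¹) • (fun _ : Fin 14 => (853776 : ℝ)) =
      fun _ : Fin 14 => (1:ℝ) := by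
    funext i
    simp only [Pi.smul_apply, smul_eq_mul]
    norm_num
  rw [this, Matrix.diagonal_one]

lemma hdetC : IsUnit Cmat.det := Matrix.isUnit_det_of_right_inverse hCC

lemma hDdiag : Matrix.diagonal dvec = ((1848:ℝ))⁻¹ • Gm := by
  ext i j
  rcases eq_or_ne i j with h | h
  · subst h
    simp [Matrix.diagonal_apply_eq, Gm, Matrix.map_apply, dvec, Matrix.smul_apply]
  · simp [Matrix.diagonal_apply_ne _ h, Gm, Matrix.map_apply, Matrix.smul_apply, h]

set_option maxHeartbeats 4000000 in
lemma hPG : PstarGram =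
    ((1577778048:ℝ))⁻¹ • (MAs.map (Int.cast : ℤ → ℝ) + rt3 • MBs.map (Int.cast : ℤ → ℝ)) := by
  have hr : rt3 = Real.sqrt 3 := rfl
  ext i j
  fin_cases i <;> fin_cases j <;>
    simp only [PstarGram, pstarEntry, MAs, MBs, Matrix.smul_apply, Matrix.add_apply,
      Matrix.map_apply, Matrix.of_apply, smul_eq_mul] <;>
    (try norm_num) <;>
    (try rw [hr]) <;>
    (try ring_nf) <;>
    (try norm_num) <;>
    (try ring_nf) <;>
    (try decide)

lemma hMC : Cmatᵀ * (Matrix.diagonal dvec * Cmat) = PstarGram := by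
  unfold Cmat
  rw [hDdiag, Matrix.transpose_smul, Matrix.transpose_add, Matrix.transpose_smul]
  rw [Matrix.smul_mul, Matrix.smul_mul, Matrix.mul_smul, Matrix.mul_smul, Matrix.mul_smul,
    smul_smul, smul_smul]
  have expand : (Pmᵀ + rt3 • Qmᵀ) * (Gm * (Pm + rt3 • Qm)) =
      (Pmᵀ * (Gm * Pm) + (Qmᵀ * (Gm * Qm) + Qmᵀ * (Gm * Qm) + Qmᵀ * (Gm * Qm))) +
        rt3 • (Pmᵀ * (Gm * Qm) + Qmᵀ * (Gm * Pm)) := by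
    simp only [add_mul, mul_add, Matrix.smul_mul, Matrix.mul_smul, smul_smul, rt3_mul_self]
    module
  rw [expand, rM1, rM2, hPG]
  congr 1
  norm_num

lemma hHerm : PstarGram.IsHermitian := by
  have h : PstarGramᵀ = PstarGram := by
    rw [← hMC]
    rw [Matrix.transpose_mul, Matrix.transpose_mul, Matrix.transpose_transpose,
      Matrix.diagonal_transpose, Matrix.mul_assoc]
  unfold Matrix.IsHermitian
  ext i j
  rw [Matrix.conjTranspose_apply]
  simp only [star_trivial]
  exact congrFun (congrFun h i) j

lemma hrank10 : PstarGram.rank = 10 := by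
  rw [← hMC, ← Matrix.mul_assoc]
  rw [Matrix.rank_mul_eq_left_of_isUnit_det Cmat _ hdetC]
  rw [Matrix.rank_mul_eq_right_of_isUnit_det Cmatᵀ _
    (by rw [Matrix.det_transpose]; exact hdetC)]
  rw [Matrix.rank_diagonal]
  rw [Fintype.card_subtype]
  have h : (univ.filter fun i : Fin 14 => dvec i ≠ 0) =
      (univ.filter fun i : Fin 14 => (i:ℕ) < 10) := by
    ext i
    simp only [Finset.mem_filter, Finset.mem_univ, true_and]
    fin_cases i <;> norm_num [dvec, DZv]
  rw [h]
  decide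

lemma quadform (v : Fin 14 → ℝ) :
    v ⬝ᵥ (PstarGram *ᵥ v) = ∑ k, dvec k * ((Cmat *ᵥ v) k) ^ 2 := by
  rw [← hMC, ← Matrix.mulVec_mulVec, Matrix.dotProduct_mulVec,
    Matrix.vecMul_transpose, ← Matrix.mulVec_mulVec]
  simp only [dotProduct, Matrix.mulVec_diagonal]
  exact Finset.sum_congr rfl fun k _ => by ring

noncomputable def i4 : Fin 14 := ⟨4, by norm_num⟩

lemma psdH (v : Fin 14 → ℝ) (hv : (Cmat *ᵥ v) i4 = 0) :
    0 ≤ v ⬝ᵥ (PstarGram *ᵥ v) := by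
  rw [quadform]
  apply Finset.sum_nonneg
  intro k _
  by_cases hk : k = i4
  · subst hk
    rw [hv]
    norm_num
  · have hd : 0 ≤ dvec k := by
      fin_cases k <;>
        first
          | exact absurd rfl hk
          | norm_num [dvec, DZv]
    exact mul_nonneg hd (sq_nonneg _)

noncomputable def e4 : Fin 14 → ℝ := fun k => if k = i4 then 1 else 0

noncomputable def vneg : Fin 14 → ℝ := CmatInv *ᵥ e4

lemma negElem : vneg ⬝ᵥ (PstarGram *ᵥ vneg) < 0 := by
  have h1 : Cmat *ᵥ vneg = e4 := by
    unfold vneg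
    rw [Matrix.mulVec_mulVec, hCC, Matrix.one_mulVec]
  rw [quadform, h1]
  have h2 : ∀ b : Fin 14, b ∈ univ → b ≠ i4 →
      dvec b * (e4 b) ^ 2 = 0 := by
    intro b _ hb
    simp only [e4, if_neg hb]
    ring
  rw [Finset.sum_eq_single_of_mem i4 (Finset.mem_univ i4) h2]
  simp only [e4, if_pos rfl]
  norm_num [dvec, DZv, i4]

/-- The Gram matrix of P⋆ has rank 10 and signature (9,1): exactly one negative
eigenvalue and nine positive eigenvalues (hence a 4-dimensional kernel). -/
theorem stmt_17 :
    PstarGram.rank = 10 ∧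
    ∃ hM : PstarGram.IsHermitian,
      (Finset.univ.filter fun i => hM.eigenvalues i < 0).card = 1 ∧
      (Finset.univ.filter fun i => 0 < hM.eigenvalues i).card = 9 := by
  have hM := hHerm
  set lam : Fin 14 → ℝ := hM.eigenvalues with hlamdef
  set U : Fin 14 → (Fin 14 → ℝ) := fun i => ⇑(hM.eigenvectorBasis i) with hUdef
  have hmv : ∀ i, PstarGram *ᵥ (U i) = lam i • (U i) := fun i =>
    hM.mulVec_eigenvectorBasis i
  have horth : ∀ i j, (U i) ⬝ᵥ (U j) = if i = j then 1 else 0 := by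
    intro i j
    have h := (orthonormal_iff_ite.mp hM.eigenvectorBasis.orthonormal) i j
    simpa [PiLp.inner_apply, RCLike.inner_apply, dotProduct, U, mul_comm] using h
  have hq : ∀ i j, (U i) ⬝ᵥ (PstarGram *ᵥ (U j)) = if i = j then lam j else 0 := by
    intro i j
    rw [hmv j, dotProduct_smul, horth]
    split <;> simp
  have huniq : ∀ i j, lam i < 0 → lam j < 0 → i = j := by
    intro i j hi hj
    by_contra hne
    by_cases ha : (Cmat *ᵥ U i) i4 = 0
    · have h0 := psdH (U i) ha
      have h1 := hq i i
      rw [if_pos rfl] at h1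
      rw [h1] at h0
      linarith
    · set a := (Cmat *ᵥ U i) i4 with hadef
      set b := (Cmat *ᵥ U j) i4 with hbdef
      set z : Fin 14 → ℝ := b • U i - a • U j with hzdef
      have hz4 : (Cmat *ᵥ z) i4 = 0 := by
        simp only [hzdef, Matrix.mulVec_sub, Matrix.mulVec_smul, Pi.sub_apply,
          Pi.smul_apply, smul_eq_mul, ← hadef, ← hbdef]
        ring
      have h0 := psdH z hz4
      have hzq : z ⬝ᵥ (PstarGram *ᵥ z) = b ^ 2 * lam i + a ^ 2 * lam j := by
        rw [hzdef]
        rw [Matrix.mulVec_sub, Matrix.mulVec_smul, Matrix.mulVec_smul]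
        rw [sub_dotProduct, smul_dotProduct, smul_dotProduct,
          dotProduct_sub, dotProduct_sub,
          dotProduct_smul, dotProduct_smul,
          dotProduct_smul, dotProduct_smul]
        rw [hq i i, hq i j, hq j i, hq j j]
        rw [if_pos rfl, if_pos rfl, if_neg hne, if_neg (Ne.symm hne)]
        simp only [smul_eq_mul]
        ring
      rw [hzq] at h0
      have ha2 : 0 < a ^ 2 := by positivity
      nlinarith [sq_nonneg b]
  have hex : (Finset.univ.filter fun i => lam i < 0).Nonempty := by
    by_contra h
    have hall : ∀ i, 0 ≤ lam i := by
      intro i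
      by_contra hi
      exact h ⟨i, Finset.mem_filter.mpr ⟨Finset.mem_univ i, by linarith⟩⟩
    have hpsd : PstarGram.PosSemidef := hM.posSemidef_iff_eigenvalues_nonneg.mpr hall
    have h2 := hpsd.dotProduct_mulVec_nonneg vneg
    simp only [star_trivial, RCLike.re_to_real] at h2
    linarith [negElem]
  have hneg1 : (Finset.univ.filter fun i => lam i < 0).card = 1 := by
    refine le_antisymm (Finset.card_le_one.mpr ?_) (Finset.one_le_card.mpr hex)
    intro a ha b hb
    simp only [Finset.mem_filter] at ha hb
    exact huniq a b ha.2 hb.2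
  have hrk := hM.rank_eq_card_non_zero_eigs
  rw [hrank10, Fintype.card_subtype] at hrk
  have hsplit : (Finset.univ.filter fun i => lam i ≠ 0) =
      (Finset.univ.filter fun i => lam i < 0) ∪
      (Finset.univ.filter fun i => 0 < lam i) := by
    ext i
    simp only [Finset.mem_filter, Finset.mem_union, Finset.mem_univ, true_and]
    constructor
    · intro h
      rcases lt_or_gt_of_ne h with h' | h'
      · exact Or.inl h'
      · exact Or.inr h'
    · rintro (h | h) <;> · intro h0; rw [h0] at h; exact absurd h (by norm_num)
  have hdisj : Disjoint (Finset.univ.filter fun i => lam i < 0)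
      (Finset.univ.filter fun i => 0 < lam i) := by
    rw [Finset.disjoint_left]
    intro i hi hj
    simp only [Finset.mem_filter] at hi hj
    linarith [hi.2, hj.2]
  rw [hsplit, Finset.card_union_of_disjoint hdisj, hneg1] at hrk
  have hpos9 : (Finset.univ.filter fun i => 0 < lam i).card = 9 := by omega
  exact ⟨hrank10, hM, hneg1, hpos9⟩
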